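/- Let q be a prime power, 1 ≤ k ≤ m, and let f : Mat → 𝔽_q be a non-zero 𝔽_q-linear map on the space of k×m matrices over 𝔽_q. Let R_f be the rank of any matrix generating the one-dimensional space ker(f)^⊥ (the trace-product orthogonal of ker(f)). Then for every 0 ≤ j ≤ k, the number of matrices of rank j in ker(f) equals (1/q) · Σ_{s=0}^{k} (−1)^{j−s} q^{ms + C(j−s,2)} · [k−s choose k−j]_q · ( [k choose s]_q + (q−1) [k−R_f choose s]_q ), where C(j−s,2) denotes binom(j−s,2). -/

import Mathlib

open Matrix

/-- The Gaussian (`q`-ary) binomial coefficient `[n choose k]_q`, defined by the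
`q`-Pascal recursion `[n+1, k+1]_q = [n, k]_q + q^(k+1) [n, k+1]_q`,
with `[n, 0]_q = 1` and `[0, k+1]_q = 0`. -/
def gaussBinom (q : ℕ) : ℕ → ℕ → ℕ
  | _, 0 => 1
  | 0, _ + 1 => 0
  | n + 1, k + 1 => gaussBinom q n k + q ^ (k + 1) * gaussBinom q n (k + 1)

namespace GBaux

variable (q : ℕ)

lemma gb_zero (n : ℕ) : gaussBinom q n 0 = 1 := by cases n <;> rfl

lemma gb_succ (n k : ℕ) : gaussBinom q (n+1) (k+1)
    = gaussBinom q n k + q ^ (k + 1) * gaussBinom q n (k + 1) := rfl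

lemma gb_eq_zero : ∀ n k, n < k → gaussBinom q n k = 0
  | 0, _+1, _ => rfl
  | n+1, k+1, h => by
      rw [gb_succ, gb_eq_zero n k (by omega), gb_eq_zero n (k+1) (by omega)]
      simp

/-- q-analog of `n`. -/
def qnum (n : ℕ) : ℕ := ∑ i ∈ Finset.range n, q ^ i

/-- q-factorial. -/
def qfact : ℕ → ℕ
  | 0 => 1
  | n+1 => qfact n * qnum q (n+1)

lemma qnum_pos (n : ℕ) (hn : 0 < n) : 0 < qnum q n := by
  unfold qnum
  exact Finset.sum_pos' (fun i _ => Nat.zero_le _)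
    ⟨0, Finset.mem_range.2 hn, by simp⟩

lemma qfact_pos : ∀ n, 0 < qfact q n
  | 0 => Nat.one_pos
  | n+1 => Nat.mul_pos (qfact_pos n) (qnum_pos q (n+1) n.succ_pos)

lemma qnum_add (a b : ℕ) : qnum q (a + b) = qnum q a + q ^ a * qnum q b := by
  unfold qnum
  rw [Finset.sum_range_add, Finset.mul_sum]
  simp [pow_add]

/-- central factorial identity -/
lemma gb_mul_fact : ∀ n s, s ≤ n →
    gaussBinom q n s * (qfact q s * qfact q (n - s)) = qfact q n
  | 0, 0, _ => by simp [gb_zero, qfact]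
  | n+1, 0, _ => by simp [gb_zero, qfact]
  | n+1, s+1, h => by
      rw [gb_succ, add_mul]
      rcases Nat.lt_or_ge s n with hs | hs
      · -- s + 1 ≤ n
        have h1 : gaussBinom q n s * (qfact q s * qfact q (n - s)) = qfact q n :=
          gb_mul_fact n s (by omega)
        have h2 : gaussBinom q n (s+1) * (qfact q (s+1) * qfact q (n - (s+1))) = qfact q n :=
          gb_mul_fact n (s+1) (by omega)
        have e1 : qfact q (s+1) = qfact q s * qnum q (s+1) := rfl
        have e2 : n + 1 - (s+1) = n - s := by omega
        have e3 : qfact q (n - s) = qfact q (n - (s+1)) * qnum q (n - s) := by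
          have : n - s = (n - (s+1)) + 1 := by omega
          rw [this]; rfl
        have key : qnum q (s+1) + q ^ (s+1) * qnum q (n - s) = qnum q (n+1) := by
          rw [← qnum_add]; congr 1; omega
        calc gaussBinom q n s * (qfact q (s+1) * qfact q (n+1 - (s+1)))
              + q ^ (s+1) * gaussBinom q n (s+1) * (qfact q (s+1) * qfact q (n+1-(s+1)))
            = gaussBinom q n s * (qfact q s * qfact q (n - s)) * qnum q (s+1)
              + q ^ (s+1) * (gaussBinom q n (s+1) * (qfact q (s+1) * qfact q (n - (s+1))))
                * qnum q (n - s) := by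
              rw [e1, e2, e3]; ring
          _ = qfact q n * qnum q (s+1) + q ^ (s+1) * qfact q n * qnum q (n - s) := by
              rw [h1, h2]
          _ = qfact q n * (qnum q (s+1) + q ^ (s+1) * qnum q (n - s)) := by ring
          _ = qfact q (n+1) := by rw [key]; rfl
      · -- s = n
        have hsn : s = n := by omega
        subst hsn
        rw [gb_eq_zero q s (s+1) (by omega)]
        have h1 : gaussBinom q s s * (qfact q s * qfact q (s - s)) = qfact q s :=
          gb_mul_fact s s le_rfl
        rw [Nat.sub_self] at h1
        have e0 : s + 1 - (s + 1) = 0 := by omega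
        rw [e0]
        have e1 : qfact q (s+1) = qfact q s * qnum q (s+1) := rfl
        calc gaussBinom q s s * (qfact q (s+1) * qfact q 0) + q^(s+1) * 0 * (qfact q (s+1) * qfact q 0)
            = gaussBinom q s s * (qfact q s * qfact q 0) * qnum q (s+1) := by rw [e1]; ring
          _ = qfact q s * qnum q (s+1) := by rw [h1]
          _ = qfact q (s+1) := rfl

lemma gb_symm {n s : ℕ} (h : s ≤ n) : gaussBinom q n s = gaussBinom q n (n - s) := by
  have h1 := gb_mul_fact q n s h
  have h2 := gb_mul_fact q n (n - s) (by omega)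
  rw [Nat.sub_sub_self h] at h2
  have e : qfact q (n-s) * qfact q s = qfact q s * qfact q (n-s) := by ring
  rw [e] at h2
  have hpos : 0 < qfact q s * qfact q (n - s) :=
    Nat.mul_pos (qfact_pos q s) (qfact_pos q (n-s))
  exact Nat.eq_of_mul_eq_mul_right hpos (h1.trans h2.symm)

/-- subset-of-subset identity -/
lemma gb_trinomial {a d u : ℕ} (hud : u ≤ d) (hda : d ≤ a) :
    gaussBinom q a u * gaussBinom q (a-u) (d-u) = gaussBinom q a d * gaussBinom q d u := by
  have key : ∀ x y : ℕ, x * (qfact q u * qfact q (d-u) * qfact q (a-d)) = y *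
      (qfact q u * qfact q (d-u) * qfact q (a-d)) → x = y := by
    intro x y hxy
    have hpos : 0 < qfact q u * qfact q (d-u) * qfact q (a-d) :=
      Nat.mul_pos (Nat.mul_pos (qfact_pos q u) (qfact_pos q (d-u))) (qfact_pos q (a-d))
    exact Nat.eq_of_mul_eq_mul_right hpos hxy
  apply key
  have h1 := gb_mul_fact q a u (le_trans hud hda)
  have h2 := gb_mul_fact q (a-u) (d-u) (by omega)
  have e2 : a - u - (d - u) = a - d := by omega
  rw [e2] at h2
  have h3 := gb_mul_fact q a d hda
  have h4 := gb_mul_fact q d u hud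
  calc gaussBinom q a u * gaussBinom q (a-u) (d-u) * (qfact q u * qfact q (d-u) * qfact q (a-d))
      = gaussBinom q a u * (gaussBinom q (a-u) (d-u) * (qfact q (d-u) * qfact q (a-d))) * qfact q u := by ring
    _ = gaussBinom q a u * qfact q (a-u) * qfact q u := by rw [h2]
    _ = gaussBinom q a u * (qfact q u * qfact q (a - u)) := by ring
    _ = qfact q a := h1
    _ = gaussBinom q a d * (qfact q d * qfact q (a-d)) := h3.symm
    _ = gaussBinom q a d * ((gaussBinom q d u * (qfact q u * qfact q (d - u)))* qfact q (a-d)) := by rw [h4]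
    _ = gaussBinom q a d * gaussBinom q d u * (qfact q u * qfact q (d-u) * qfact q (a-d)) := by ring

/-- alternating sum identity, in ℚ -/
lemma gb_alternating (d : ℕ) (hd : 1 ≤ d) :
    ∑ u ∈ Finset.range (d+1), (-1 : ℚ)^u * (q : ℚ)^(u.choose 2) * (gaussBinom q d u : ℚ) = 0 := by
  obtain ⟨e, rfl⟩ : ∃ e, d = e + 1 := ⟨d - 1, by omega⟩
  set g : ℕ → ℚ := fun v => (-1:ℚ)^v * (q:ℚ)^((v+1).choose 2) * (gaussBinom q e v : ℚ) with hg
  rw [Finset.sum_range_succ']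
  have h0 : (-1:ℚ)^0 * (q:ℚ)^((0:ℕ).choose 2) * (gaussBinom q (e+1) 0 : ℚ) = 1 := by
    simp [gb_zero]
  rw [h0]
  have hterm : ∀ u, (-1:ℚ)^(u+1) * (q:ℚ)^((u+1).choose 2) * (gaussBinom q (e+1) (u+1) : ℚ)
      = g (u+1) - g u := by
    intro u
    rw [gb_succ]
    have hc : (u+1+1).choose 2 = (u+1).choose 2 + (u+1) := by
      rw [Nat.choose_succ_succ (u+1) 1, Nat.choose_one_right]; ring
    simp only [hg]
    rw [hc]
    push_cast
    ring
  rw [Finset.sum_congr rfl (fun u _ => hterm u), Finset.sum_range_sub]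
  have hge : g (e+1) = 0 := by
    simp only [hg]
    rw [gb_eq_zero q e (e+1) (by omega)]
    simp
  have hg0 : g 0 = 1 := by simp [hg, gb_zero]
  rw [hge, hg0]
  ring

end GBaux

namespace GBaux

variable (q : ℕ)

lemma geom_mul (hq : 1 ≤ q) : ∀ j, (q - 1) * qnum q j = q ^ j - 1
  | 0 => by simp [qnum]
  | j+1 => by
      have h1 : qnum q (j+1) = qnum q j + q ^ j := Finset.sum_range_succ _ _
      have h2 := geom_mul hq j
      have h3 : 1 ≤ q ^ j := Nat.one_le_pow _ _ (by omega)
      have h4 : q ^ (j+1) = q * q ^ j := by ring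
      have h6 : q ^ j ≤ q ^ (j+1) := Nat.pow_le_pow_right (by omega) (by omega)
      rw [h1, Nat.mul_add, h2]
      have h5 : (q - 1) * q ^ j = q ^ (j+1) - q ^ j := by
        rw [Nat.sub_mul, one_mul, ← h4]
      omega

lemma prodLem (hq : 1 ≤ q) : ∀ s n, s ≤ n →
    (∏ i ∈ Finset.range s, (q ^ n - q ^ i)) * qfact q (n - s)
      = q ^ (s.choose 2) * (q - 1) ^ s * qfact q n
  | 0, n, _ => by simp
  | s+1, n, h => by
      have ih := prodLem hq s n (by omega)
      rw [Finset.prod_range_succ]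
      have key : q ^ n - q ^ s = q ^ s * ((q-1) * qnum q (n - s)) := by
        rw [geom_mul q hq]
        rw [Nat.mul_sub, mul_one, ← pow_add]
        congr 2
        omega
      have e1 : qfact q (n - s) = qfact q (n - (s+1)) * qnum q (n - s) := by
        have : n - s = (n - (s+1)) + 1 := by omega
        rw [this]; rfl
      have e2 : (s+1).choose 2 = s.choose 2 + s := by
        rw [Nat.choose_succ_succ s 1, Nat.choose_one_right]; ring
      calc (∏ i ∈ Finset.range s, (q ^ n - q ^ i)) * (q ^ n - q ^ s) * qfact q (n - (s+1))
          = ((∏ i ∈ Finset.range s, (q ^ n - q ^ i)) * (qfact q (n - (s+1)) * qnum q (n-s)))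
            * (q ^ s * (q-1)) := by rw [key]; ring
        _ = ((∏ i ∈ Finset.range s, (q ^ n - q ^ i)) * qfact q (n - s)) * (q ^ s * (q-1)) := by
            rw [e1]
        _ = q ^ (s.choose 2) * (q - 1) ^ s * qfact q n * (q ^ s * (q-1)) := by rw [ih]
        _ = q ^ ((s+1).choose 2) * (q-1)^(s+1) * qfact q n := by
            rw [e2, pow_add, pow_succ]; ring

lemma gb_mul_prod (hq : 1 ≤ q) {n s : ℕ} (h : s ≤ n) :
    gaussBinom q n s * ∏ i ∈ Finset.range s, (q ^ s - q ^ i)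
      = ∏ i ∈ Finset.range s, (q ^ n - q ^ i) := by
  have key : ∀ x y : ℕ, x * qfact q (n - s) = y * qfact q (n - s) → x = y :=
    fun x y hxy => Nat.eq_of_mul_eq_mul_right (qfact_pos q _) hxy
  apply key
  have p1 := prodLem q hq s s le_rfl
  rw [Nat.sub_self] at p1
  have p2 := prodLem q hq s n h
  have p3 := gb_mul_fact q n s h
  calc gaussBinom q n s * (∏ i ∈ Finset.range s, (q ^ s - q ^ i)) * qfact q (n - s)
      = gaussBinom q n s * ((∏ i ∈ Finset.range s, (q ^ s - q ^ i)) * qfact q 0) * qfact q (n-s) := by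
        show _ = gaussBinom q n s * (_ * 1) * _ ; ring
    _ = gaussBinom q n s * (q ^ (s.choose 2) * (q-1)^s * qfact q s) * qfact q (n - s) := by rw [p1]
    _ = q ^ (s.choose 2) * (q-1)^s * (gaussBinom q n s * (qfact q s * qfact q (n - s))) := by ring
    _ = q ^ (s.choose 2) * (q-1)^s * qfact q n := by rw [p3]
    _ = (∏ i ∈ Finset.range s, (q ^ n - q ^ i)) * qfact q (n - s) := p2.symm

end GBaux

section Counting

open Module Submodule GBaux

variable {F V : Type*} [Field F] [Fintype F] [AddCommGroup V] [Module F V] [Finite V]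

/-- number of `s`-dimensional subspaces of a finite vector space -/
theorem card_subspaces_eq_gauss (s : ℕ) (hs : s ≤ finrank F V) :
    Nat.card {U : Submodule F V // finrank F ↥U = s}
      = gaussBinom (Fintype.card F) (finrank F V) s := by
  classical
  have : Fintype V := Fintype.ofFinite V
  set q := Fintype.card F with hqdef
  set n := finrank F V with hndef
  have hq : 2 ≤ q := Fintype.one_lt_card
  let Φ : {t : Fin s → V // LinearIndependent F t} → {U : Submodule F V // finrank F ↥U = s} :=
    fun t => ⟨Submodule.span F (Set.range t.1), by
      rw [finrank_span_eq_card t.2]; simp⟩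
  have fibercard : ∀ U : {U : Submodule F V // finrank F ↥U = s},
      Nat.card {t // Φ t = U} = ∏ i ∈ Finset.range s, (q ^ s - q ^ i) := by
    intro U
    have hU : finrank F ↥U.1 = s := U.2
    let e : {t // Φ t = U} ≃ {t' : Fin s → ↥U.1 // LinearIndependent F t'} :=
      { toFun := fun t => ⟨fun i => ⟨t.1.1 i, by
          have h : Submodule.span F (Set.range t.1.1) = U.1 := congrArg Subtype.val t.2
          exact h ▸ Submodule.subset_span (Set.mem_range_self i)⟩, by
          apply LinearIndependent.of_comp U.1.subtype
          exact t.1.2⟩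
        invFun := fun t' => ⟨⟨U.1.subtype ∘ t'.1, t'.2.map' U.1.subtype (Submodule.ker_subtype _)⟩, by
          apply Subtype.ext
          show Submodule.span F (Set.range (U.1.subtype ∘ t'.1)) = U.1
          have hle : Submodule.span F (Set.range (U.1.subtype ∘ t'.1)) ≤ U.1 := by
            rw [Submodule.span_le]
            rintro x ⟨i, rfl⟩
            exact (t'.1 i).2
          apply Submodule.eq_of_le_of_finrank_le hle
          have heq : finrank F ↥(Submodule.span F (Set.range (U.1.subtype ∘ t'.1))) = s := by
            rw [finrank_span_eq_card (t'.2.map' U.1.subtype (Submodule.ker_subtype _))]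
            simp
          rw [heq, hU]⟩
        left_inv := fun t => by apply Subtype.ext; apply Subtype.ext; rfl
        right_inv := fun t' => by apply Subtype.ext; funext i; apply Subtype.ext; rfl }
    rw [Nat.card_congr e]
    have := card_linearIndependent (K := F) (V := ↥U.1) (k := s) (by rw [hU])
    rw [this, hU]
    rw [Finset.prod_range fun i => (q ^ s - q ^ i)]
  have main : Nat.card {t : Fin s → V // LinearIndependent F t}
      = Nat.card {U : Submodule F V // finrank F ↥U = s} * ∏ i ∈ Finset.range s, (q ^ s - q ^ i) := by
    rw [Nat.card_congr (Equiv.sigmaFiberEquiv Φ).symm, Nat.card_eq_fintype_card,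
      Fintype.card_sigma]
    have hfib : ∀ U : {U : Submodule F V // finrank F ↥U = s},
        Fintype.card {t // Φ t = U} = ∏ i ∈ Finset.range s, (q ^ s - q ^ i) := by
      intro U; rw [← Nat.card_eq_fintype_card]; exact fibercard U
    rw [Finset.sum_congr rfl (fun U _ => hfib U), Finset.sum_const, Finset.card_univ,
      smul_eq_mul, Nat.card_eq_fintype_card]
  have lhs : Nat.card {t : Fin s → V // LinearIndependent F t}
      = ∏ i ∈ Finset.range s, (q ^ n - q ^ i) := by
    rw [card_linearIndependent (K := F) (V := V) hs]
    rw [Finset.prod_range fun i => (q ^ n - q ^ i)]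
  have prodpos : 0 < ∏ i ∈ Finset.range s, (q ^ s - q ^ i) := by
    apply Finset.prod_pos
    intro i hi
    have : q ^ i < q ^ s := Nat.pow_lt_pow_right (by omega) (Finset.mem_range.mp hi)
    omega
  have := gb_mul_prod q (by omega) hs
  apply Nat.eq_of_mul_eq_mul_right prodpos
  rw [← main, lhs, this]

end Counting

section Counting2

open Module Submodule GBaux

variable {F V : Type*} [Field F] [Fintype F] [AddCommGroup V] [Module F V] [Finite V]

theorem card_subspaces_eq_gauss' (s : ℕ) :
    Nat.card {U : Submodule F V // finrank F ↥U = s}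
      = gaussBinom (Fintype.card F) (finrank F V) s := by
  rcases le_or_gt s (finrank F V) with h | h
  · exact card_subspaces_eq_gauss s h
  · have : IsEmpty {U : Submodule F V // finrank F ↥U = s} := by
      constructor
      rintro ⟨U, hU⟩
      have := Submodule.finrank_le U
      omega
    rw [Nat.card_of_isEmpty, gb_eq_zero _ _ _ h]

lemma finrank_comap_mkQ (T : Submodule F V) (U' : Submodule F (V ⧸ T)) :
    finrank F ↥(Submodule.comap T.mkQ U') = finrank F ↥U' + finrank F ↥T := by
  set S := Submodule.comap T.mkQ U' with hS
  have hTS : T ≤ S := by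
    intro x hx
    show T.mkQ x ∈ U'
    rw [Submodule.mkQ_apply, (Submodule.Quotient.mk_eq_zero _).mpr hx]
    exact U'.zero_mem
  have h1 := LinearMap.finrank_range_add_finrank_ker (T.mkQ.domRestrict S)
  have h2 : LinearMap.range (T.mkQ.domRestrict S) = U' := by
    rw [LinearMap.range_domRestrict]
    exact Submodule.map_comap_eq_self (by rw [Submodule.range_mkQ]; exact le_top)
  have h3 : LinearMap.ker (T.mkQ.domRestrict S) = Submodule.comap S.subtype T := by
    rw [LinearMap.ker_domRestrict, Submodule.ker_mkQ]
  have h4 : finrank F ↥(Submodule.comap S.subtype T) = finrank F ↥T :=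
    LinearEquiv.finrank_eq (Submodule.comapSubtypeEquivOfLe hTS)
  rw [h2, h3, h4] at h1
  exact h1.symm

theorem card_subspaces_above (T : Submodule F V) (d : ℕ) (ht : finrank F ↥T ≤ d) :
    Nat.card {U : Submodule F V // finrank F ↥U = d ∧ T ≤ U}
      = gaussBinom (Fintype.card F) (finrank F V - finrank F ↥T) (d - finrank F ↥T) := by
  classical
  set t := finrank F ↥T
  have hq : finrank F (V ⧸ T) = finrank F V - t := by
    have := Submodule.finrank_quotient_add_finrank T
    omega
  let e : {U' : Submodule F (V ⧸ T) // finrank F ↥U' = d - t}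
      ≃ {U : Submodule F V // finrank F ↥U = d ∧ T ≤ U} :=
    { toFun := fun U' => ⟨((Submodule.comapMkQRelIso T) U'.1).1, by
        constructor
        · show finrank F ↥(Submodule.comap T.mkQ U'.1) = d
          rw [finrank_comap_mkQ, U'.2]
          omega
        · exact ((Submodule.comapMkQRelIso T) U'.1).2⟩
      invFun := fun U => ⟨(Submodule.comapMkQRelIso T).symm ⟨U.1, U.2.2⟩, by
        have hc : Submodule.comap T.mkQ ((Submodule.comapMkQRelIso T).symm ⟨U.1, U.2.2⟩) = U.1 := by
          have := (Submodule.comapMkQRelIso T).apply_symm_apply ⟨U.1, U.2.2⟩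
          exact congrArg Subtype.val this
        have h5 := finrank_comap_mkQ T ((Submodule.comapMkQRelIso T).symm ⟨U.1, U.2.2⟩)
        rw [hc] at h5
        have h6 := U.2.1
        omega⟩
      left_inv := fun U' => by
        apply Subtype.ext
        have := (Submodule.comapMkQRelIso T).symm_apply_apply U'.1
        convert this using 2
      right_inv := fun U => by
        have := (Submodule.comapMkQRelIso T).apply_symm_apply ⟨U.1, U.2.2⟩
        apply Subtype.ext
        convert congrArg Subtype.val this using 1 }
  have : Finite (V ⧸ T) := Finite.of_surjective T.mkQ (Submodule.mkQ_surjective T)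
  rw [← Nat.card_congr e, ← hq]
  exact card_subspaces_eq_gauss' (d - t)

theorem card_subspaces_below (W : Submodule F V) (s : ℕ) :
    Nat.card {U : Submodule F V // finrank F ↥U = s ∧ U ≤ W}
      = gaussBinom (Fintype.card F) (finrank F ↥W) s := by
  classical
  let e : {U' : Submodule F ↥W // finrank F ↥U' = s}
      ≃ {U : Submodule F V // finrank F ↥U = s ∧ U ≤ W} :=
    { toFun := fun U' => ⟨((Submodule.MapSubtype.orderIso W) U'.1).1, by
        refine ⟨?_, ((Submodule.MapSubtype.orderIso W) U'.1).2⟩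
        show finrank F ↥(Submodule.map W.subtype U'.1) = s
        rw [Submodule.finrank_map_subtype_eq, U'.2]⟩
      invFun := fun U => ⟨(Submodule.MapSubtype.orderIso W).symm ⟨U.1, U.2.2⟩, by
        have hc : Submodule.map W.subtype ((Submodule.MapSubtype.orderIso W).symm ⟨U.1, U.2.2⟩) = U.1 := by
          have := (Submodule.MapSubtype.orderIso W).apply_symm_apply ⟨U.1, U.2.2⟩
          exact congrArg Subtype.val this
        have h5 := Submodule.finrank_map_subtype_eq W ((Submodule.MapSubtype.orderIso W).symm ⟨U.1, U.2.2⟩)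
        rw [hc] at h5
        have h6 := U.2.1
        omega⟩
      left_inv := fun U' => by
        apply Subtype.ext
        have := (Submodule.MapSubtype.orderIso W).symm_apply_apply U'.1
        convert this using 2
      right_inv := fun U => by
        have := (Submodule.MapSubtype.orderIso W).apply_symm_apply ⟨U.1, U.2.2⟩
        apply Subtype.ext
        convert congrArg Subtype.val this using 1 }
  rw [← Nat.card_congr e]
  exact card_subspaces_eq_gauss' s

lemma card_ker_aux (g : V →ₗ[F] F) :
    Nat.card {v : V // g v = 0} = Fintype.card F ^ finrank F ↥(LinearMap.ker g) := by
  classical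
  have : Fintype V := Fintype.ofFinite V
  have e : {v : V // g v = 0} ≃ ↥(LinearMap.ker g) :=
    Equiv.subtypeEquivRight (fun v => (LinearMap.mem_ker).symm)
  rw [Nat.card_congr e, Nat.card_eq_fintype_card]
  exact card_eq_pow_finrank (K := F) (V := ↥(LinearMap.ker g))

theorem card_ker_functional_zero (g : V →ₗ[F] F) (hg : g = 0) :
    Nat.card {v : V // g v = 0} = (Fintype.card F) ^ (finrank F V) := by
  rw [card_ker_aux g, hg]
  congr 1
  rw [LinearMap.ker_zero]
  exact finrank_top F V

theorem card_ker_functional_ne (g : V →ₗ[F] F) (hg : g ≠ 0) :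
    Nat.card {v : V // g v = 0} = (Fintype.card F) ^ (finrank F V - 1) := by
  rw [card_ker_aux g]
  have hrange : LinearMap.range g = ⊤ := by
    obtain ⟨v, hv⟩ : ∃ v, g v ≠ 0 := by
      by_contra h
      push_neg at h
      exact hg (LinearMap.ext fun v => h v)
    rw [Submodule.eq_top_iff']
    intro x
    exact ⟨(x * (g v)⁻¹) • v, by rw [_root_.map_smul, smul_eq_mul, mul_assoc, inv_mul_cancel₀ hv, mul_one]⟩
  have h1 := LinearMap.finrank_range_add_finrank_ker g
  rw [hrange, finrank_top, Module.finrank_self] at h1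
  congr 1
  omega

end Counting2

section MainCounting

open Module Submodule GBaux Matrix
open scoped Classical

variable {F : Type*} [Field F] [Fintype F]
variable {k m : ℕ}

local notation "q" => Fintype.card F

lemma hfM_trace (N M : Matrix (Fin k) (Fin m) F) :
    Matrix.trace (M * Nᵀ) = ∑ j, (Nᵀ.mulVec (Mᵀ j)) j := by
  rw [Matrix.trace]
  simp only [Matrix.diag, Matrix.mul_apply, Matrix.transpose_apply, Matrix.mulVec,
    dotProduct]
  rw [Finset.sum_comm]
  apply Finset.sum_congr rfl
  intro j _
  apply Finset.sum_congr rfl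
  intro i _
  ring

lemma cardA (f : Matrix (Fin k) (Fin m) F →ₗ[F] F) (N : Matrix (Fin k) (Fin m) F)
    (hfN : ∀ M, f M = Matrix.trace (M * Nᵀ)) (U : Submodule F (Fin k → F)) :
    Nat.card {M : Matrix (Fin k) (Fin m) F // f M = 0 ∧ ∀ j, Mᵀ j ∈ U}
      = if U ≤ LinearMap.ker (Nᵀ.mulVecLin) then q ^ (m * finrank F ↥U)
        else q ^ (m * finrank F ↥U - 1) := by
  classical
  let ι : (Fin m → ↥U) →ₗ[F] Matrix (Fin k) (Fin m) F :=
    { toFun := fun a => Matrix.of fun i j => (a j : Fin k → F) i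
      map_add' := fun a b => rfl
      map_smul' := fun c a => rfl }
  let g := f ∘ₗ ι
  have e : {a : Fin m → ↥U // g a = 0} ≃ {M : Matrix (Fin k) (Fin m) F // f M = 0 ∧ ∀ j, Mᵀ j ∈ U} :=
    { toFun := fun a => ⟨ι a.1, a.2, fun j => by
        have : (ι a.1)ᵀ j = (a.1 j : Fin k → F) := rfl
        rw [this]; exact (a.1 j).2⟩
      invFun := fun M => ⟨fun j => ⟨Mᵀ j, M.2.2 j⟩, by
        have : ι (fun j => (⟨Mᵀ j, M.2.2 j⟩ : ↥U)) = M.1 := by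
          ext i j; rfl
        show f _ = 0
        rw [this]; exact M.2.1⟩
      left_inv := fun a => by
        apply Subtype.ext; funext j; apply Subtype.ext; rfl
      right_inv := fun M => by
        apply Subtype.ext; ext i j; rfl }
  rw [← Nat.card_congr e]
  have hfr : finrank F (Fin m → ↥U) = m * finrank F ↥U := by
    rw [Module.finrank_pi_fintype]
    simp [Finset.sum_const, Finset.card_univ, mul_comm]
  have hg : ∀ a : Fin m → ↥U, g a = ∑ j, (Nᵀ.mulVec ((a j : Fin k → F))) j := by
    intro a
    show f (ι a) = _
    rw [hfN, hfM_trace]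
    apply Finset.sum_congr rfl
    intro j _
    congr 1
  by_cases hle : U ≤ LinearMap.ker (Nᵀ.mulVecLin)
  · rw [if_pos hle, ← hfr]
    apply card_ker_functional_zero
    apply LinearMap.ext
    intro a
    rw [hg a]
    show _ = (0 : F)
    apply Finset.sum_eq_zero
    intro j _
    have : Nᵀ.mulVec ((a j : Fin k → F)) = 0 := by
      have := hle (a j).2
      rwa [LinearMap.mem_ker, Matrix.mulVecLin_apply] at this
    rw [this]
    rfl
  · rw [if_neg hle, ← hfr]
    apply card_ker_functional_ne
    intro h0
    obtain ⟨x, hxU, hxW⟩ : ∃ x, x ∈ U ∧ x ∉ LinearMap.ker (Nᵀ.mulVecLin) := by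
      by_contra h
      push_neg at h
      exact hle h
    have hx : Nᵀ.mulVec x ≠ 0 := by
      rw [LinearMap.mem_ker, Matrix.mulVecLin_apply] at hxW
      exact hxW
    obtain ⟨j₀, hj₀⟩ := Function.ne_iff.mp hx
    let a : Fin m → ↥U := fun j => if j = j₀ then ⟨x, hxU⟩ else 0
    have hga : g a = (Nᵀ.mulVec x) j₀ := by
      rw [hg a]
      rw [Finset.sum_eq_single j₀]
      · simp only [a, if_pos rfl]
      · intro j _ hj
        simp only [a, if_neg hj]
        show (Nᵀ.mulVec ((0 : ↥U) : Fin k → F)) j = 0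
        rw [Submodule.coe_zero, Matrix.mulVec_zero]
        rfl
      · intro h; exact absurd (Finset.mem_univ j₀) h
    rw [h0] at hga
    exact hj₀ (by simpa using hga.symm)

lemma cardB (s : ℕ) (M : Matrix (Fin k) (Fin m) F) :
    Nat.card {U : Submodule F (Fin k → F) // finrank F ↥U = s ∧ ∀ j, Mᵀ j ∈ U}
      = if M.rank ≤ s then gaussBinom q (k - M.rank) (s - M.rank) else 0 := by
  classical
  have hcond : ∀ U : Submodule F (Fin k → F),
      (∀ j, Mᵀ j ∈ U) ↔ LinearMap.range M.mulVecLin ≤ U := by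
    intro U
    rw [Matrix.range_mulVecLin, Submodule.span_le, Set.range_subset_iff]
    rfl
  have e : {U : Submodule F (Fin k → F) // finrank F ↥U = s ∧ ∀ j, Mᵀ j ∈ U}
      ≃ {U : Submodule F (Fin k → F) // finrank F ↥U = s ∧ LinearMap.range M.mulVecLin ≤ U} :=
    Equiv.subtypeEquivRight (fun U => and_congr_right fun _ => hcond U)
  rw [Nat.card_congr e]
  have hrank : finrank F ↥(LinearMap.range M.mulVecLin) = M.rank := rfl
  have hV : finrank F (Fin k → F) = k := by
    rw [Module.finrank_pi]
    exact Fintype.card_fin k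
  by_cases h : M.rank ≤ s
  · rw [if_pos h]
    have := card_subspaces_above (LinearMap.range M.mulVecLin) s (by rw [hrank]; exact h)
    rw [this, hrank, hV]
  · rw [if_neg h]
    have : IsEmpty {U : Submodule F (Fin k → F) // finrank F ↥U = s ∧ LinearMap.range M.mulVecLin ≤ U} := by
      constructor
      rintro ⟨U, hU, hTU⟩
      have h1 : finrank F ↥(LinearMap.range M.mulVecLin) ≤ finrank F ↥U :=
        Submodule.finrank_mono hTU
      rw [hrank, hU] at h1
      omega
    rw [Nat.card_of_isEmpty]

end MainCounting

section ECounting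

open Module Submodule GBaux Matrix
open scoped Classical

variable {F : Type*} [Field F] [Fintype F]
variable {k m : ℕ}

local notation "q" => Fintype.card F

lemma E_counting (hk : 1 ≤ k) (hkm : k ≤ m)
    (f : Matrix (Fin k) (Fin m) F →ₗ[F] F) (N : Matrix (Fin k) (Fin m) F)
    (hfN : ∀ M, f M = Matrix.trace (M * Nᵀ)) {s : ℕ} (hs : s ≤ k) :
    (q : ℚ) * ∑ r ∈ Finset.range (s+1),
        (Nat.card {M : Matrix (Fin k) (Fin m) F // f M = 0 ∧ M.rank = r} : ℚ)
          * (gaussBinom q (k-r) (s-r) : ℚ)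
      = (q : ℚ)^(m*s) * ((gaussBinom q k s : ℚ)
          + ((q:ℚ)-1) * (gaussBinom q (k - N.rank) s : ℚ)) := by
  classical
  set W := LinearMap.ker (Nᵀ.mulVecLin) with hWdef
  have hV : finrank F (Fin k → F) = k := by
    rw [Module.finrank_pi]; exact Fintype.card_fin k
  have hWrank : finrank F ↥W = k - N.rank := by
    have h1 := LinearMap.finrank_range_add_finrank_ker (Nᵀ.mulVecLin)
    rw [hV] at h1
    have h2 : Nᵀ.rank = N.rank := Matrix.rank_transpose N
    have h3 : Nᵀ.rank = finrank F ↥(LinearMap.range (Nᵀ.mulVecLin)) := rfl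
    have h4 : finrank F ↥W = finrank F ↥(LinearMap.ker (Nᵀ.mulVecLin)) := rfl
    omega
  set φ : ℕ → ℚ := fun r => if r ≤ s then (gaussBinom q (k-r) (s-r) : ℚ) else 0 with hφ
  -- Step T1
  have T1 : ∑ r ∈ Finset.range (s+1),
        (Nat.card {M : Matrix (Fin k) (Fin m) F // f M = 0 ∧ M.rank = r} : ℚ)
          * (gaussBinom q (k-r) (s-r) : ℚ)
      = ∑ r ∈ Finset.range (k+1),
        (Nat.card {M : Matrix (Fin k) (Fin m) F // f M = 0 ∧ M.rank = r} : ℚ) * φ r := by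
    rw [← Finset.sum_subset (Finset.range_subset_range.mpr (by omega : s+1 ≤ k+1))
      (fun r _ hr => by
        have : ¬ r ≤ s := by
          simp only [Finset.mem_range, not_lt] at hr
          omega
        simp only [hφ, if_neg this, mul_zero])]
    apply Finset.sum_congr rfl
    intro r hr
    have : r ≤ s := by
      have := Finset.mem_range.mp hr
      omega
    simp only [hφ, if_pos this]
  -- Step T2 : group by rank
  have T2 : ∑ r ∈ Finset.range (k+1),
        (Nat.card {M : Matrix (Fin k) (Fin m) F // f M = 0 ∧ M.rank = r} : ℚ) * φ r
      = ∑ M : {M : Matrix (Fin k) (Fin m) F // f M = 0}, φ (M.1.rank) := by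
    have hmaps : ∀ M ∈ Finset.univ.filter (fun M : Matrix (Fin k) (Fin m) F => f M = 0),
        M.rank ∈ Finset.range (k+1) := by
      intro M _
      exact Finset.mem_range.mpr (by have := Matrix.rank_le_height M; omega)
    rw [← Finset.sum_subtype (Finset.univ.filter (fun M : Matrix (Fin k) (Fin m) F => f M = 0))
      (fun M => by simp) (fun M => φ M.rank)]
    rw [← Finset.sum_fiberwise_of_maps_to hmaps (fun M => φ M.rank)]
    apply Finset.sum_congr rfl
    intro r _
    rw [Finset.filter_filter]
    have hcard : Nat.card {M : Matrix (Fin k) (Fin m) F // f M = 0 ∧ M.rank = r}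
        = (Finset.univ.filter (fun M : Matrix (Fin k) (Fin m) F => f M = 0 ∧ M.rank = r)).card := by
      rw [Nat.card_eq_fintype_card, Fintype.card_subtype]
    have hterm : ∀ M ∈ Finset.univ.filter (fun M : Matrix (Fin k) (Fin m) F => f M = 0 ∧ M.rank = r),
        φ M.rank = φ r := by
      intro M hM
      rw [(Finset.mem_filter.mp hM).2.2]
    rw [Finset.sum_congr rfl hterm, Finset.sum_const, nsmul_eq_mul, hcard]
  -- Step T3 : pointwise cardB
  have T3 : ∑ M : {M : Matrix (Fin k) (Fin m) F // f M = 0}, φ (M.1.rank)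
      = ∑ M : {M : Matrix (Fin k) (Fin m) F // f M = 0},
          (Nat.card {U : Submodule F (Fin k → F) // finrank F ↥U = s ∧ ∀ j, (M.1)ᵀ j ∈ U} : ℚ) := by
    apply Finset.sum_congr rfl
    intro M _
    rw [cardB s M.1]
    by_cases h : M.1.rank ≤ s
    · simp only [hφ, if_pos h]
    · simp only [hφ, if_neg h, Nat.cast_zero]
  -- Step T4 : swap
  have T4 : ∑ M : {M : Matrix (Fin k) (Fin m) F // f M = 0},
        (Nat.card {U : Submodule F (Fin k → F) // finrank F ↥U = s ∧ ∀ j, (M.1)ᵀ j ∈ U} : ℕ)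
      = ∑ U : {U : Submodule F (Fin k → F) // finrank F ↥U = s},
        (Nat.card {M : Matrix (Fin k) (Fin m) F // f M = 0 ∧ ∀ j, Mᵀ j ∈ U.1} : ℕ) := by
    let e : (Σ M : {M : Matrix (Fin k) (Fin m) F // f M = 0},
          {U : Submodule F (Fin k → F) // finrank F ↥U = s ∧ ∀ j, (M.1)ᵀ j ∈ U})
        ≃ (Σ U : {U : Submodule F (Fin k → F) // finrank F ↥U = s},
          {M : Matrix (Fin k) (Fin m) F // f M = 0 ∧ ∀ j, Mᵀ j ∈ U.1}) :=
      { toFun := fun p => ⟨⟨p.2.1, p.2.2.1⟩, ⟨p.1.1, p.1.2, p.2.2.2⟩⟩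
        invFun := fun p => ⟨⟨p.2.1, p.2.2.1⟩, ⟨p.1.1, p.1.2, p.2.2.2⟩⟩
        left_inv := fun p => rfl
        right_inv := fun p => rfl }
    have h1 := Fintype.card_congr e
    rw [Fintype.card_sigma, Fintype.card_sigma] at h1
    calc ∑ M : {M : Matrix (Fin k) (Fin m) F // f M = 0},
          (Nat.card {U : Submodule F (Fin k → F) // finrank F ↥U = s ∧ ∀ j, (M.1)ᵀ j ∈ U} : ℕ)
        = ∑ M : {M : Matrix (Fin k) (Fin m) F // f M = 0},
          Fintype.card {U : Submodule F (Fin k → F) // finrank F ↥U = s ∧ ∀ j, (M.1)ᵀ j ∈ U} := by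
          apply Finset.sum_congr rfl; intro M _; exact Nat.card_eq_fintype_card
      _ = ∑ U : {U : Submodule F (Fin k → F) // finrank F ↥U = s},
          Fintype.card {M : Matrix (Fin k) (Fin m) F // f M = 0 ∧ ∀ j, Mᵀ j ∈ U.1} := h1
      _ = ∑ U : {U : Submodule F (Fin k → F) // finrank F ↥U = s},
          (Nat.card {M : Matrix (Fin k) (Fin m) F // f M = 0 ∧ ∀ j, Mᵀ j ∈ U.1} : ℕ) := by
          apply Finset.sum_congr rfl; intro U _; exact Nat.card_eq_fintype_card.symm
  -- Step T5 : evaluate the subspace-side sum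
  have hval : ∀ U : {U : Submodule F (Fin k → F) // finrank F ↥U = s},
      (q:ℚ) * (Nat.card {M : Matrix (Fin k) (Fin m) F // f M = 0 ∧ ∀ j, Mᵀ j ∈ U.1} : ℚ)
        = if U.1 ≤ W then (q:ℚ)^(m*s+1) else (q:ℚ)^(m*s) := by
    intro U
    rw [cardA f N hfN U.1, U.2]
    split_ifs with h
    · push_cast; ring
    · have hs1 : 1 ≤ s := by
        rcases Nat.eq_zero_or_pos s with h0 | h1
        · exfalso
          apply h
          have : U.1 = ⊥ := Submodule.finrank_eq_zero.mp (by rw [U.2, h0])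
          rw [this]
          exact bot_le
        · exact h1
      have hms : 1 ≤ m * s := Nat.mul_pos (by omega) hs1
      have e1 : m * s - 1 + 1 = m * s := by omega
      push_cast
      have e2 : ((q:ℚ))^(m*s) = ((q:ℚ))^(m*s-1+1) := by rw [e1]
      rw [e2, pow_succ]
      ring
  have T5 : (q:ℚ) * ∑ U : {U : Submodule F (Fin k → F) // finrank F ↥U = s},
        (Nat.card {M : Matrix (Fin k) (Fin m) F // f M = 0 ∧ ∀ j, Mᵀ j ∈ U.1} : ℚ)
      = (q : ℚ)^(m*s) * ((gaussBinom q k s : ℚ)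
          + ((q:ℚ)-1) * (gaussBinom q (k - N.rank) s : ℚ)) := by
    rw [Finset.mul_sum, Finset.sum_congr rfl (fun U _ => hval U), Finset.sum_ite,
      Finset.sum_const, Finset.sum_const, nsmul_eq_mul, nsmul_eq_mul]
    have hA : (Finset.univ.filter (fun U : {U : Submodule F (Fin k → F) // finrank F ↥U = s} => U.1 ≤ W)).card
        = gaussBinom q (k - N.rank) s := by
      rw [← Fintype.card_subtype, ← Nat.card_eq_fintype_card]
      calc Nat.card {x : {U : Submodule F (Fin k → F) // finrank F ↥U = s} // (x : Submodule F (Fin k → F)) ≤ W}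
          = Nat.card {U : Submodule F (Fin k → F) // finrank F ↥U = s ∧ U ≤ W} :=
            Nat.card_congr (Equiv.subtypeSubtypeEquivSubtypeInter (fun U : Submodule F (Fin k → F) => finrank F ↥U = s) (fun U => U ≤ W))
        _ = gaussBinom q (finrank F ↥W) s := card_subspaces_below W s
        _ = gaussBinom q (k - N.rank) s := by rw [hWrank]
    have htot : (Finset.univ : Finset {U : Submodule F (Fin k → F) // finrank F ↥U = s}).card
        = gaussBinom q k s := by
      have h := card_subspaces_eq_gauss' (F := F) (V := Fin k → F) s
      rw [hV] at h
      rw [Finset.card_univ, ← Nat.card_eq_fintype_card]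
      exact h
    have hsplit := Finset.card_filter_add_card_filter_not
      (s := (Finset.univ : Finset {U : Submodule F (Fin k → F) // finrank F ↥U = s}))
      (p := fun U => U.1 ≤ W)
    rw [hA, htot] at hsplit
    have hBc : ((Finset.univ.filter (fun U : {U : Submodule F (Fin k → F) // finrank F ↥U = s} => ¬ U.1 ≤ W)).card : ℚ)
        = (gaussBinom q k s : ℚ) - (gaussBinom q (k - N.rank) s : ℚ) := by
      have := hsplit
      push_cast [← this]
      ring
    rw [hA, hBc, pow_succ]
    ring
  -- assemble
  calc (q : ℚ) * ∑ r ∈ Finset.range (s+1),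
        (Nat.card {M : Matrix (Fin k) (Fin m) F // f M = 0 ∧ M.rank = r} : ℚ)
          * (gaussBinom q (k-r) (s-r) : ℚ)
      = (q:ℚ) * ∑ M : {M : Matrix (Fin k) (Fin m) F // f M = 0},
          (Nat.card {U : Submodule F (Fin k → F) // finrank F ↥U = s ∧ ∀ j, (M.1)ᵀ j ∈ U} : ℚ) := by
        rw [T1, T2, T3]
    _ = (q:ℚ) * ∑ U : {U : Submodule F (Fin k → F) // finrank F ↥U = s},
          (Nat.card {M : Matrix (Fin k) (Fin m) F // f M = 0 ∧ ∀ j, Mᵀ j ∈ U.1} : ℚ) := by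
        congr 1
        rw [← Nat.cast_sum, ← Nat.cast_sum, T4]
    _ = _ := T5

end ECounting

namespace GBaux

lemma K_lemma (q k t s : ℕ) (ht : t ≤ k) (hs : s ≤ k) :
    ∑ r ∈ Finset.range (s+1), (-1:ℚ)^(r-t) * (q:ℚ)^((r-t).choose 2)
        * (gaussBinom q (k-r) (s-r) : ℚ) * (gaussBinom q (k-t) (k-r) : ℚ)
      = if t = s then 1 else 0 := by
  rcases le_or_gt t s with hts | hts
  · -- t ≤ s
    set d := s - t with hd
    have hzero : ∀ r ∈ Finset.range t, (-1:ℚ)^(r-t) * (q:ℚ)^((r-t).choose 2)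
        * (gaussBinom q (k-r) (s-r) : ℚ) * (gaussBinom q (k-t) (k-r) : ℚ) = 0 := by
      intro r hr
      have hrt : r < t := Finset.mem_range.mp hr
      rw [gb_eq_zero q (k-t) (k-r) (by omega)]
      simp
    have hsplit : ∑ r ∈ Finset.range (s+1), (-1:ℚ)^(r-t) * (q:ℚ)^((r-t).choose 2)
          * (gaussBinom q (k-r) (s-r) : ℚ) * (gaussBinom q (k-t) (k-r) : ℚ)
        = ∑ r ∈ Finset.Ico t (s+1), (-1:ℚ)^(r-t) * (q:ℚ)^((r-t).choose 2)
          * (gaussBinom q (k-r) (s-r) : ℚ) * (gaussBinom q (k-t) (k-r) : ℚ) := by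
      rw [← Finset.sum_range_add_sum_Ico _ (show t ≤ s+1 by omega)]
      rw [Finset.sum_congr rfl hzero]
      simp
    rw [hsplit, Finset.sum_Ico_eq_sum_range]
    have hcnt : s + 1 - t = d + 1 := by omega
    rw [hcnt]
    have hterm : ∀ u ∈ Finset.range (d+1),
        (-1:ℚ)^(t+u-t) * (q:ℚ)^((t+u-t).choose 2)
          * (gaussBinom q (k-(t+u)) (s-(t+u)) : ℚ) * (gaussBinom q (k-t) (k-(t+u)) : ℚ)
        = (gaussBinom q (k-t) d : ℚ) * ((-1:ℚ)^u * (q:ℚ)^(u.choose 2) * (gaussBinom q d u : ℚ)) := by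
      intro u hu
      have hud : u ≤ d := by
        have := Finset.mem_range.mp hu; omega
      have e1 : t + u - t = u := by omega
      have e2 : k - (t+u) = (k-t) - u := by omega
      have e3 : s - (t+u) = d - u := by omega
      have e4 : k - (t+u) = (k-t) - u := e2
      rw [e1, e2, e3]
      have hsymm : gaussBinom q (k-t) (k-t-u) = gaussBinom q (k-t) u := by
        have := gb_symm q (n := k-t) (s := u) (by omega)
        rw [this]
      rw [hsymm]
      have htri : gaussBinom q (k-t) u * gaussBinom q (k-t-u) (d-u)
          = gaussBinom q (k-t) d * gaussBinom q d u :=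
        gb_trinomial q (a := k-t) (d := d) (u := u) hud (by omega)
      have : (gaussBinom q (k-t-u) (d-u) : ℚ) * (gaussBinom q (k-t) u : ℚ)
          = (gaussBinom q (k-t) d : ℚ) * (gaussBinom q d u : ℚ) := by
        rw [mul_comm]
        exact_mod_cast congrArg (Nat.cast : ℕ → ℚ) htri
      calc (-1:ℚ)^u * (q:ℚ)^(u.choose 2) * (gaussBinom q (k-t-u) (d-u) : ℚ) * (gaussBinom q (k-t) u : ℚ)
          = (-1:ℚ)^u * (q:ℚ)^(u.choose 2) * ((gaussBinom q (k-t-u) (d-u) : ℚ) * (gaussBinom q (k-t) u : ℚ)) := by ring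
        _ = (-1:ℚ)^u * (q:ℚ)^(u.choose 2) * ((gaussBinom q (k-t) d : ℚ) * (gaussBinom q d u : ℚ)) := by rw [this]
        _ = (gaussBinom q (k-t) d : ℚ) * ((-1:ℚ)^u * (q:ℚ)^(u.choose 2) * (gaussBinom q d u : ℚ)) := by ring
    rw [Finset.sum_congr rfl hterm, ← Finset.mul_sum]
    rcases Nat.eq_zero_or_pos d with hd0 | hd1
    · -- t = s
      have : t = s := by omega
      rw [if_pos this, hd0]
      simp [gb_zero]
    · have : t ≠ s := by omega
      rw [if_neg this, gb_alternating q d hd1, mul_zero]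
  · -- t > s : all terms vanish
    have : ∀ r ∈ Finset.range (s+1), (-1:ℚ)^(r-t) * (q:ℚ)^((r-t).choose 2)
        * (gaussBinom q (k-r) (s-r) : ℚ) * (gaussBinom q (k-t) (k-r) : ℚ) = 0 := by
      intro r hr
      have hrs : r < s + 1 := Finset.mem_range.mp hr
      rw [gb_eq_zero q (k-t) (k-r) (by omega)]
      simp
    rw [Finset.sum_congr rfl this]
    have : t ≠ s := by omega
    simp [this]

lemma inversion_sum (q k m : ℕ) (H : ℕ → ℚ) {s : ℕ} (hs : s ≤ k) :
    ∑ r ∈ Finset.range (s+1),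
        (∑ t ∈ Finset.range (k+1),
          (-1:ℚ)^(r-t) * (q:ℚ)^(m*t + (r-t).choose 2) * (gaussBinom q (k-t) (k-r) : ℚ) * H t)
        * (gaussBinom q (k-r) (s-r) : ℚ)
      = (q:ℚ)^(m*s) * H s := by
  have step1 : ∑ r ∈ Finset.range (s+1),
        (∑ t ∈ Finset.range (k+1),
          (-1:ℚ)^(r-t) * (q:ℚ)^(m*t + (r-t).choose 2) * (gaussBinom q (k-t) (k-r) : ℚ) * H t)
        * (gaussBinom q (k-r) (s-r) : ℚ)
      = ∑ r ∈ Finset.range (s+1), ∑ t ∈ Finset.range (k+1),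
          ((q:ℚ)^(m*t) * H t) * ((-1:ℚ)^(r-t) * (q:ℚ)^((r-t).choose 2)
              * (gaussBinom q (k-r) (s-r) : ℚ) * (gaussBinom q (k-t) (k-r) : ℚ)) := by
    apply Finset.sum_congr rfl
    intro r _
    rw [Finset.sum_mul]
    apply Finset.sum_congr rfl
    intro t _
    rw [pow_add]
    ring
  rw [step1, Finset.sum_comm]
  have step2 : ∀ t ∈ Finset.range (k+1),
      ∑ r ∈ Finset.range (s+1),
          ((q:ℚ)^(m*t) * H t) * ((-1:ℚ)^(r-t) * (q:ℚ)^((r-t).choose 2)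
              * (gaussBinom q (k-r) (s-r) : ℚ) * (gaussBinom q (k-t) (k-r) : ℚ))
        = ((q:ℚ)^(m*t) * H t) * (if t = s then 1 else 0) := by
    intro t htk
    rw [← Finset.mul_sum, K_lemma q k t s (by simpa using Nat.lt_succ_iff.mp (Finset.mem_range.mp htk)) hs]
  rw [Finset.sum_congr rfl step2]
  have : ∀ t ∈ Finset.range (k+1), ((q:ℚ)^(m*t) * H t) * (if t = s then 1 else 0)
      = if t = s then (q:ℚ)^(m*t) * H t else 0 := by
    intro t _
    split_ifs <;> ring
  rw [Finset.sum_congr rfl this, Finset.sum_ite_eq' (Finset.range (k+1)) s (fun t => (q:ℚ)^(m*t) * H t)]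
  try rw [if_pos (Finset.mem_range.mpr (show s < k + 1 by omega))]

end GBaux

/-- Let `F` be a finite field with `q` elements, `f : Mat → F` a non-zero linear map
on `k × m` matrices, given by `f(M) = Tr(M Nᵗ)` for a (unique) non-zero matrix `N`
(so that `R_f = rk(N)` is the rank of any generator of `ker(f)^⊥`). Then for every
`0 ≤ j ≤ k` the number of matrices of rank `j` in `ker(f)` equals
`(1/q) Σ_{s=0}^k (−1)^{j−s} q^{ms + C(j−s,2)} [k−s, k−j]_q ([k, s]_q + (q−1)[k−R_f, s]_q)`. -/
theorem stmt_18 {F : Type*} [Field F] [Fintype F]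
    (k m : ℕ) (hk : 1 ≤ k) (hkm : k ≤ m)
    (f : Matrix (Fin k) (Fin m) F →ₗ[F] F) (hf : f ≠ 0)
    (N : Matrix (Fin k) (Fin m) F) (hN : N ≠ 0)
    (hfN : ∀ M : Matrix (Fin k) (Fin m) F, f M = Matrix.trace (M * Nᵀ))
    (j : ℕ) (hj : j ≤ k) :
    (Nat.card {M : Matrix (Fin k) (Fin m) F // f M = 0 ∧ M.rank = j} : ℚ)
      = (1 / (Fintype.card F : ℚ))
          * ∑ s ∈ Finset.range (k + 1),
              (-1 : ℚ) ^ (j - s)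
                * (Fintype.card F : ℚ) ^ (m * s + (j - s).choose 2)
                * (gaussBinom (Fintype.card F) (k - s) (k - j) : ℚ)
                * ((gaussBinom (Fintype.card F) k s : ℚ)
                    + ((Fintype.card F : ℚ) - 1)
                        * (gaussBinom (Fintype.card F) (k - N.rank) s : ℚ)) := by
  classical
  have hq0 : ((Fintype.card F : ℕ) : ℚ) ≠ 0 := Nat.cast_ne_zero.mpr Fintype.card_ne_zero
  have key : ∀ s, s ≤ k →
      (Nat.card {M : Matrix (Fin k) (Fin m) F // f M = 0 ∧ M.rank = s} : ℚ)
        = (1 / (Fintype.card F : ℚ))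
            * ∑ t ∈ Finset.range (k + 1),
                (-1 : ℚ) ^ (s - t)
                  * (Fintype.card F : ℚ) ^ (m * t + (s - t).choose 2)
                  * (gaussBinom (Fintype.card F) (k - t) (k - s) : ℚ)
                  * ((gaussBinom (Fintype.card F) k t : ℚ)
                      + ((Fintype.card F : ℚ) - 1)
                          * (gaussBinom (Fintype.card F) (k - N.rank) t : ℚ)) := by
    intro s
    induction s using Nat.strong_induction_on with
    | _ s ih =>
      intro hs
      have e1 := E_counting hk hkm f N hfN hs
      have e2 : (Fintype.card F : ℚ) * ∑ r ∈ Finset.range (s+1),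
            ((1 / (Fintype.card F : ℚ))
              * ∑ t ∈ Finset.range (k + 1),
                  (-1 : ℚ) ^ (r - t)
                    * (Fintype.card F : ℚ) ^ (m * t + (r - t).choose 2)
                    * (gaussBinom (Fintype.card F) (k - t) (k - r) : ℚ)
                    * ((gaussBinom (Fintype.card F) k t : ℚ)
                        + ((Fintype.card F : ℚ) - 1)
                            * (gaussBinom (Fintype.card F) (k - N.rank) t : ℚ)))
              * (gaussBinom (Fintype.card F) (k-r) (s-r) : ℚ)
          = (Fintype.card F : ℚ)^(m*s) * ((gaussBinom (Fintype.card F) k s : ℚ)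
              + ((Fintype.card F : ℚ) - 1)
                  * (gaussBinom (Fintype.card F) (k - N.rank) s : ℚ)) := by
        have expand : ∀ r ∈ Finset.range (s+1), (Fintype.card F : ℚ) *
            (((1 / (Fintype.card F : ℚ))
              * ∑ t ∈ Finset.range (k + 1),
                  (-1 : ℚ) ^ (r - t)
                    * (Fintype.card F : ℚ) ^ (m * t + (r - t).choose 2)
                    * (gaussBinom (Fintype.card F) (k - t) (k - r) : ℚ)
                    * ((gaussBinom (Fintype.card F) k t : ℚ)
                        + ((Fintype.card F : ℚ) - 1)
                            * (gaussBinom (Fintype.card F) (k - N.rank) t : ℚ)))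
              * (gaussBinom (Fintype.card F) (k-r) (s-r) : ℚ))
            = (∑ t ∈ Finset.range (k + 1),
                  (-1 : ℚ) ^ (r - t)
                    * (Fintype.card F : ℚ) ^ (m * t + (r - t).choose 2)
                    * (gaussBinom (Fintype.card F) (k - t) (k - r) : ℚ)
                    * ((gaussBinom (Fintype.card F) k t : ℚ)
                        + ((Fintype.card F : ℚ) - 1)
                            * (gaussBinom (Fintype.card F) (k - N.rank) t : ℚ)))
              * (gaussBinom (Fintype.card F) (k-r) (s-r) : ℚ) := by
          intro r _
          field_simp
        rw [Finset.mul_sum, Finset.sum_congr rfl expand]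
        exact GBaux.inversion_sum (Fintype.card F) k m
          (fun t => (gaussBinom (Fintype.card F) k t : ℚ)
              + ((Fintype.card F : ℚ) - 1)
                  * (gaussBinom (Fintype.card F) (k - N.rank) t : ℚ)) hs
      have e3 := mul_left_cancel₀ hq0 (e1.trans e2.symm)
      rw [Finset.sum_range_succ, Finset.sum_range_succ] at e3
      have e4 : ∑ r ∈ Finset.range s,
            (Nat.card {M : Matrix (Fin k) (Fin m) F // f M = 0 ∧ M.rank = r} : ℚ)
              * (gaussBinom (Fintype.card F) (k-r) (s-r) : ℚ)
          = ∑ r ∈ Finset.range s,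
            ((1 / (Fintype.card F : ℚ))
              * ∑ t ∈ Finset.range (k + 1),
                  (-1 : ℚ) ^ (r - t)
                    * (Fintype.card F : ℚ) ^ (m * t + (r - t).choose 2)
                    * (gaussBinom (Fintype.card F) (k - t) (k - r) : ℚ)
                    * ((gaussBinom (Fintype.card F) k t : ℚ)
                        + ((Fintype.card F : ℚ) - 1)
                            * (gaussBinom (Fintype.card F) (k - N.rank) t : ℚ)))
              * (gaussBinom (Fintype.card F) (k-r) (s-r) : ℚ) := by
        apply Finset.sum_congr rfl
        intro r hr
        have hrs := Finset.mem_range.mp hr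
        rw [ih r hrs (by omega)]
      rw [e4] at e3
      have e5 := add_left_cancel e3
      have e6 : (gaussBinom (Fintype.card F) (k-s) (s-s) : ℚ) = 1 := by
        rw [Nat.sub_self, GBaux.gb_zero]
        norm_num
      rw [e6, mul_one, mul_one] at e5
      exact e5
  exact key j hj
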